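/- For every d ≥ 2, n(d-1,d) = 3·2^{d-2}, where n(k,d) is the maximum size of a family F ⊆ {0,1,*}^d such that every two distinct members x,y satisfy 1 ≤ D(x,y) ≤ k. -/

import Mathlib

open Finset

/-- Number of coordinates where one string has 0 and the other 1. -/
def Dd {d : ℕ} (x y : Fin d → Option Bool) : ℕ :=
  (univ.filter fun i => ∃ b : Bool, x i = some b ∧ y i = some !b).card

/-- The subcube of binary strings agreeing with `x` on all non-joker coordinates. -/
def Hcube {d : ℕ} (x : Fin d → Option Bool) : Finset (Fin d → Bool) :=
  univ.filter fun u => ∀ i : Fin d, ∀ b : Bool, x i = some b → u i = b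

/-- Number of joker (`*`) coordinates of `x`. -/
def jok {d : ℕ} (x : Fin d → Option Bool) : ℕ :=
  (univ.filter fun i => x i = none).card

/-- `k`-neighborly family of strings in `{0,1,*}^d`. -/
def Nbly {d : ℕ} (k : ℕ) (F : Finset (Fin d → Option Bool)) : Prop :=
  ∀ x ∈ F, ∀ y ∈ F, x ≠ y → 1 ≤ Dd x y ∧ Dd x y ≤ k

/-- `n(k,d)`: maximum size of a `k`-neighborly family in `{0,1,*}^d`. -/
noncomputable def nbox (k d : ℕ) : ℕ :=
  sSup {n | ∃ F : Finset (Fin d → Option Bool), Nbly k F ∧ F.card = n}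

/-! ### Auxiliary lemmas -/

section Aux

variable {d : ℕ}

lemma Dd_pos_of {x y : Fin d → Option Bool} (i : Fin d) (b : Bool)
    (hx : x i = some b) (hy : y i = some !b) : 1 ≤ Dd x y := by
  refine Finset.card_pos.mpr ⟨i, ?_⟩
  simp only [mem_filter, mem_univ, true_and]
  exact ⟨b, hx, hy⟩

lemma Dd_le_of {x y : Fin d → Option Bool} (i : Fin d)
    (h : ¬∃ b : Bool, x i = some b ∧ y i = some !b) : Dd x y ≤ d - 1 := by
  have hsub : (univ.filter fun j => ∃ b : Bool, x j = some b ∧ y j = some !b)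
      ⊆ univ.erase i := by
    intro j hj
    simp only [mem_filter, mem_univ, true_and] at hj
    refine Finset.mem_erase.mpr ⟨?_, mem_univ _⟩
    rintro rfl; exact h hj
  calc Dd x y ≤ (univ.erase i).card := Finset.card_le_card hsub
    _ = d - 1 := by
        rw [Finset.card_erase_of_mem (mem_univ i)]
        simp

lemma Dd_eq_d {x y : Fin d → Option Bool} (u : Fin d → Bool)
    (hx : ∀ i, x i = some (u i)) (hy : ∀ i, y i = some (!u i)) : Dd x y = d := by
  have : (univ.filter fun i => ∃ b : Bool, x i = some b ∧ y i = some !b) = univ := by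
    refine Finset.eq_univ_of_forall fun i => ?_
    simp only [mem_filter, mem_univ, true_and]
    exact ⟨u i, hx i, hy i⟩
  rw [Dd, this]
  simp

lemma mem_Hcube {x : Fin d → Option Bool} {u : Fin d → Bool} :
    u ∈ Hcube x ↔ ∀ i : Fin d, ∀ b : Bool, x i = some b → u i = b := by
  simp [Hcube]

lemma Hcube_nonempty (x : Fin d → Option Bool) : (Hcube x).Nonempty := by
  refine ⟨fun i => (x i).getD false, mem_Hcube.mpr fun i b hb => ?_⟩
  rw [hb]; rfl

lemma two_le_card_Hcube {x : Fin d → Option Bool} (h : jok x ≠ 0) :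
    2 ≤ (Hcube x).card := by
  have : (univ.filter fun i => x i = none).Nonempty := by
    rw [← Finset.card_pos]
    exact Nat.pos_of_ne_zero h
  obtain ⟨i, hi⟩ := this
  simp only [mem_filter, mem_univ, true_and] at hi
  set u : Fin d → Bool := fun j => (x j).getD false with hu
  have hmem : u ∈ Hcube x := mem_Hcube.mpr fun j b hb => by rw [hu]; simp [hb]
  have hmem' : Function.update u i true ∈ Hcube x := by
    refine mem_Hcube.mpr fun j b hb => ?_
    have hij : j ≠ i := by rintro rfl; rw [hi] at hb; cases hb
    rw [Function.update_of_ne hij]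
    exact mem_Hcube.mp hmem j b hb
  have hne : u ≠ Function.update u i true := by
    intro heq
    have h1 : u i = Function.update u i true i := congrFun heq i
    rw [Function.update_self, hu] at h1
    simp [hi] at h1
  refine Finset.one_lt_card.mpr ⟨u, hmem, Function.update u i true, hmem', hne⟩

lemma Hcube_disjoint {x y : Fin d → Option Bool} (h : 1 ≤ Dd x y) :
    Disjoint (Hcube x) (Hcube y) := by
  obtain ⟨i, hi⟩ := Finset.card_pos.mp h
  simp only [mem_filter, mem_univ, true_and] at hi
  obtain ⟨b, hx, hy⟩ := hi
  rw [Finset.disjoint_left]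
  intro u hux huy
  have h1 := mem_Hcube.mp hux i b hx
  have h2 := mem_Hcube.mp huy i (!b) hy
  rw [h1] at h2
  exact absurd h2 (by cases b <;> simp)

/-- Flipping coordinate `i` gives a card bijection between the two halves of a filter. -/
lemma card_filter_flip (i : Fin d) (p : (Fin d → Bool) → Prop) [DecidablePred p]
    (hp : ∀ u b, p u → p (Function.update u i b)) (b : Bool) :
    (univ.filter fun u => p u ∧ u i = b).card
      = (univ.filter fun u => p u ∧ u i = !b).card := by
  refine Finset.card_bij (fun u _ => Function.update u i (!b)) ?_ ?_ ?_
  · intro u hu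
    simp only [mem_filter, mem_univ, true_and] at hu ⊢
    exact ⟨hp u (!b) hu.1, by simp⟩
  · intro u hu v hv heq
    simp only [mem_filter, mem_univ, true_and] at hu hv
    funext j
    by_cases hj : j = i
    · subst hj; rw [hu.2, hv.2]
    · simpa [Function.update_of_ne hj] using congrFun heq j
  · intro v hv
    simp only [mem_filter, mem_univ, true_and] at hv
    refine ⟨Function.update v i b, ?_, ?_⟩
    · simp only [mem_filter, mem_univ, true_and]
      exact ⟨hp v b hv.1, by simp⟩
    · funext j
      by_cases hj : j = i
      · subst hj; simp [hv.2]
      · simp [Function.update_of_ne hj]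

lemma card_filter_half (i : Fin d) (p : (Fin d → Bool) → Prop) [DecidablePred p]
    (hp : ∀ u b, p u → p (Function.update u i b)) (b : Bool) :
    2 * (univ.filter fun u => p u ∧ u i = b).card = (univ.filter p).card := by
  have hsplit : (univ.filter p) =
      (univ.filter fun u => p u ∧ u i = b) ∪ (univ.filter fun u => p u ∧ u i = !b) := by
    ext u
    simp only [mem_filter, mem_univ, true_and, mem_union]
    constructor
    · intro hpu
      by_cases hub : u i = b
      · exact Or.inl ⟨hpu, hub⟩
      · exact Or.inr ⟨hpu, by
          revert hub; cases hb : u i <;> cases b <;> simp⟩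
    · rintro (h | h) <;> exact h.1
  have hdisj : Disjoint (univ.filter fun u => p u ∧ u i = b)
      (univ.filter fun u => p u ∧ u i = !b) := by
    rw [Finset.disjoint_left]
    intro u h1 h2
    simp only [mem_filter, mem_univ, true_and] at h1 h2
    rw [h1.2] at h2
    exact absurd h2.2 (by cases b <;> simp)
  rw [hsplit, Finset.card_union_of_disjoint hdisj, ← card_filter_flip i p hp b]
  ring

end Aux

/-! ### Upper bound -/

section Upper

variable {d : ℕ}

lemma card_cube : Fintype.card (Fin d → Bool) = 2 ^ d := by
  simp

/-- Extract the underlying binary string from a jokerless string. -/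
lemma jokerless_eq_some {x : Fin d → Option Bool} (h : jok x = 0) (i : Fin d) :
    x i = some ((x i).getD false) := by
  have : x i ≠ none := by
    intro hnone
    have : i ∈ univ.filter fun j => x j = none := by
      simp [hnone]
    have hpos := Finset.card_pos.mpr ⟨i, this⟩
    rw [jok] at h
    omega
  cases hxi : x i with
  | none => exact absurd hxi this
  | some b => rfl

lemma F0_card_le {F : Finset (Fin d → Option Bool)} (hd : 2 ≤ d)
    (hF : Nbly (d - 1) F) :
    (F.filter fun x => jok x = 0).card ≤ 2 ^ (d - 1) := by
  classical
  set F0 := F.filter fun x => jok x = 0 with hF0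
  set ub : (Fin d → Option Bool) → (Fin d → Bool) := fun x i => (x i).getD false with hub
  set S := F0.image ub with hS
  have hxi : ∀ x ∈ F0, ∀ i, x i = some (ub x i) := by
    intro x hx i
    exact jokerless_eq_some (Finset.mem_filter.mp hx).2 i
  have hinj : ∀ x ∈ F0, ∀ y ∈ F0, ub x = ub y → x = y := by
    intro x hx y hy heq
    funext i
    rw [hxi x hx i, hxi y hy i, heq]
  have hcardS : S.card = F0.card := Finset.card_image_of_injOn hinj
  set neg : (Fin d → Bool) → (Fin d → Bool) := fun u i => !u i with hneg
  have hneginj : Function.Injective neg := by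
    intro u v h
    funext i
    have := congrFun h i
    simp only [hneg] at this
    simpa using this
  have hdisjS : Disjoint S (S.image neg) := by
    rw [Finset.disjoint_left]
    intro z hz hz'
    obtain ⟨x, hx, hxz⟩ := Finset.mem_image.mp hz
    obtain ⟨w, hw, hwz⟩ := Finset.mem_image.mp hz'
    obtain ⟨y, hy, hyw⟩ := Finset.mem_image.mp hw
    -- z = ub x = neg (ub y), so x and y are antipodal full strings
    have hxF : x ∈ F := (Finset.mem_filter.mp hx).1
    have hyF : y ∈ F := (Finset.mem_filter.mp hy).1
    have key : ∀ i, ub x i = !(ub y i) := by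
      intro i
      rw [hxz, ← hwz, ← hyw]

    have hDd : Dd y x = d := by
      refine Dd_eq_d (ub y) (hxi y hy) fun i => ?_
      rw [hxi x hx i, key i]
    have hne : y ≠ x := by
      rintro rfl
      have hcontr := key ⟨0, by omega⟩
      simp at hcontr
    have := (hF y hyF x hxF hne).2
    rw [hDd] at this
    omega
  have hcard2 : 2 * S.card ≤ 2 ^ d := by
    have : S.card + (S.image neg).card = (S ∪ S.image neg).card :=
      (Finset.card_union_of_disjoint hdisjS).symm
    have hle : (S ∪ S.image neg).card ≤ Fintype.card (Fin d → Bool) :=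
      Finset.card_le_univ _
    rw [Finset.card_image_of_injective _ hneginj] at this
    rw [card_cube] at hle
    omega
  have h2d : 2 ^ d = 2 * 2 ^ (d - 1) := by
    rw [← pow_succ']
    congr 1
    omega
  omega

lemma upper_bound {F : Finset (Fin d → Option Bool)} (hd : 2 ≤ d)
    (hF : Nbly (d - 1) F) : F.card ≤ 3 * 2 ^ (d - 2) := by
  classical
  set F0 := F.filter fun x => jok x = 0 with hF0
  set F1 := F.filter fun x => ¬ jok x = 0 with hF1
  have hsplit : F0.card + F1.card = F.card := Finset.card_filter_add_card_filter_not _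
  -- sum of cube cards bounded by 2^d
  have hdisj : (F : Set (Fin d → Option Bool)).PairwiseDisjoint Hcube := by
    intro x hx y hy hne
    exact Hcube_disjoint (hF x hx y hy hne).1
  have hsum : ∑ x ∈ F, (Hcube x).card ≤ 2 ^ d := by
    rw [← Finset.card_biUnion hdisj]
    calc (F.biUnion Hcube).card ≤ Fintype.card (Fin d → Bool) := Finset.card_le_univ _
      _ = 2 ^ d := card_cube
  -- weight bound
  have hw : F0.card + 2 * F1.card ≤ ∑ x ∈ F, (Hcube x).card := by
    have h1 : ∀ x ∈ F0, 1 ≤ (Hcube x).card := fun x _ =>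
      Finset.card_pos.mpr (Hcube_nonempty x)
    have h2 : ∀ x ∈ F1, 2 ≤ (Hcube x).card := fun x hx =>
      two_le_card_Hcube (Finset.mem_filter.mp hx).2
    calc F0.card + 2 * F1.card
        = ∑ _x ∈ F0, 1 + ∑ _x ∈ F1, 2 := by
          rw [Finset.sum_const, Finset.sum_const, smul_eq_mul, smul_eq_mul]
          ring
      _ ≤ ∑ x ∈ F0, (Hcube x).card + ∑ x ∈ F1, (Hcube x).card :=
          Nat.add_le_add (Finset.sum_le_sum h1) (Finset.sum_le_sum h2)
      _ = ∑ x ∈ F, (Hcube x).card := Finset.sum_filter_add_sum_filter_not _ _ _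
  have hF0le : F0.card ≤ 2 ^ (d - 1) := F0_card_le hd hF
  obtain ⟨m, rfl⟩ : ∃ m, d = m + 2 := ⟨d - 2, by omega⟩
  have e1 : 2 ^ (m + 2) = 4 * 2 ^ m := by ring
  have e2 : (2 : ℕ) ^ (m + 2 - 1) = 2 * 2 ^ m := by
    have : m + 2 - 1 = m + 1 := by omega
    rw [this]; ring
  have e3 : m + 2 - 2 = m := by omega
  rw [e3]
  omega

end Upper

/-! ### Lower bound: the construction -/

section Lower

variable {m : ℕ}

lemma card_fix1 {d : ℕ} (i : Fin d) (b : Bool) :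
    2 * (univ.filter fun u : Fin d → Bool => u i = b).card = 2 ^ d := by
  have h := card_filter_half i (fun _ => True) (fun _ _ _ => trivial) b
  simp only [true_and, Finset.filter_true, Finset.card_univ, card_cube] at h
  exact h

lemma card_fix2 {d : ℕ} (i j : Fin d) (hij : i ≠ j) (b c : Bool) :
    4 * (univ.filter fun u : Fin d → Bool => u i = b ∧ u j = c).card = 2 ^ d := by
  have h : 2 * (univ.filter fun u : Fin d → Bool => u i = b ∧ u j = c).card
      = (univ.filter fun u : Fin d → Bool => u i = b).card :=
    card_filter_half j (fun u => u i = b)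
      (fun u b' hu => by
        show Function.update u j b' i = b
        rw [Function.update_of_ne hij]; exact hu) c
  have h1 := card_fix1 i b
  rw [show (4 : ℕ) = 2 * 2 from rfl, mul_assoc, h, h1]

lemma construction (m : ℕ) :
    ∃ F : Finset (Fin (m + 2) → Option Bool),
      Nbly (m + 1) F ∧ F.card = 3 * 2 ^ m := by
  classical
  set i0 : Fin (m + 2) := ⟨0, by omega⟩ with hi0
  set i1 : Fin (m + 2) := ⟨1, by omega⟩ with hi1
  have hi01 : i0 ≠ i1 := by simp [hi0, hi1, Fin.ext_iff]
  set SA : Finset (Fin (m + 2) → Bool) := univ.filter fun u => u i0 = false with hSA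
  set SB : Finset (Fin (m + 2) → Bool) :=
    univ.filter fun u => u i0 = true ∧ u i1 = true with hSB
  set fA : (Fin (m + 2) → Bool) → (Fin (m + 2) → Option Bool) :=
    fun u i => some (u i) with hfA
  set fB : (Fin (m + 2) → Bool) → (Fin (m + 2) → Option Bool) :=
    fun u i => if i = i1 then none else some (u i) with hfB
  set A := SA.image fA with hA
  set B := SB.image fB with hB
  refine ⟨A ∪ B, ?_, ?_⟩
  · -- Neighborliness
    intro x hx y hy hne
    have hxy : ∀ z ∈ A ∪ B,
        (∃ u, u i0 = false ∧ z = fA u) ∨ (∃ u, u i0 = true ∧ u i1 = true ∧ z = fB u) := by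
      intro z hz
      rcases Finset.mem_union.mp hz with h | h
      · obtain ⟨u, hu, rfl⟩ := Finset.mem_image.mp h
        simp only [hSA, mem_filter, mem_univ, true_and] at hu
        exact Or.inl ⟨u, hu, rfl⟩
      · obtain ⟨u, hu, rfl⟩ := Finset.mem_image.mp h
        simp only [hSB, mem_filter, mem_univ, true_and] at hu
        exact Or.inr ⟨u, hu.1, hu.2, rfl⟩
    have hd1 : (m + 2 : ℕ) - 1 = m + 1 := by omega
    rcases hxy x hx with ⟨u, hu0, rfl⟩ | ⟨u, hu0, hu1, rfl⟩ <;>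
      rcases hxy y hy with ⟨v, hv0, rfl⟩ | ⟨v, hv0, hv1, rfl⟩
    · -- both in A
      have huv : u ≠ v := fun h => hne (by rw [h])
      obtain ⟨i, hi⟩ : ∃ i, u i ≠ v i := by
        by_contra h
        push_neg at h
        exact huv (funext h)
      have hvi : v i = !u i := by cases h1 : u i <;> cases h2 : v i <;> simp_all
      constructor
      · exact Dd_pos_of i (u i) rfl (by simp [hfA, hvi])
      · rw [← hd1]
        refine Dd_le_of i0 ?_
        rintro ⟨b, hb1, hb2⟩
        simp only [hfA, hu0, hv0, Option.some.injEq] at hb1 hb2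
        rw [← hb1] at hb2
        simp at hb2
    · -- x ∈ A, y ∈ B
      constructor
      · refine Dd_pos_of i0 false ?_ ?_
        · simp [hfA, hu0]
        · simp [hfB, hi01, hv0]
      · rw [← hd1]
        refine Dd_le_of i1 ?_
        rintro ⟨b, hb1, hb2⟩
        simp [hfB] at hb2
    · -- x ∈ B, y ∈ A
      constructor
      · refine Dd_pos_of i0 true ?_ ?_
        · simp [hfB, hi01, hu0]
        · simp [hfA, hv0]
      · rw [← hd1]
        refine Dd_le_of i1 ?_
        rintro ⟨b, hb1, hb2⟩
        simp [hfB] at hb1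
    · -- both in B
      have huv : u ≠ v := by
        rintro rfl; exact hne rfl
      obtain ⟨i, hi⟩ : ∃ i, u i ≠ v i := by
        by_contra h
        push_neg at h
        exact huv (funext h)
      have hii1 : i ≠ i1 := by
        rintro rfl; rw [hu1, hv1] at hi; exact hi rfl
      have hvi : v i = !u i := by cases h1 : u i <;> cases h2 : v i <;> simp_all
      constructor
      · refine Dd_pos_of i (u i) ?_ ?_
        · simp [hfB, hii1]
        · simp [hfB, hii1, hvi]
      · rw [← hd1]
        refine Dd_le_of i1 ?_
        rintro ⟨b, hb1, hb2⟩
        simp [hfB] at hb1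
  · -- Cardinality
    have hcardSA : SA.card = 2 ^ (m + 1) := by
      have h : 2 * SA.card = 2 ^ (m + 2) := card_fix1 i0 false
      have h2 : (2 : ℕ) ^ (m + 2) = 2 * 2 ^ (m + 1) := by ring
      omega
    have hcardSB : SB.card = 2 ^ m := by
      have h : 4 * SB.card = 2 ^ (m + 2) := card_fix2 i0 i1 hi01 true true
      have h2 : (2 : ℕ) ^ (m + 2) = 4 * 2 ^ m := by ring
      omega
    have hcardA : A.card = 2 ^ (m + 1) := by
      rw [hA, Finset.card_image_of_injective _ ?_, hcardSA]
      intro u v h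
      funext i
      have := congrFun h i
      simpa [hfA] using this
    have hcardB : B.card = 2 ^ m := by
      rw [hB, Finset.card_image_of_injOn ?_, hcardSB]
      intro u hu v hv h
      rw [Finset.mem_coe, hSB, Finset.mem_filter] at hu hv
      funext i
      by_cases hii : i = i1
      · subst hii; rw [hu.2.2, hv.2.2]
      · have := congrFun h i
        simpa [hfB, hii] using this
    have hABdisj : Disjoint A B := by
      rw [Finset.disjoint_left]
      intro z hzA hzB
      obtain ⟨u, _, rfl⟩ := Finset.mem_image.mp hzA
      obtain ⟨v, _, hv⟩ := Finset.mem_image.mp hzB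
      have := congrFun hv i1
      simp [hfA, hfB] at this
    rw [Finset.card_union_of_disjoint hABdisj, hcardA, hcardB]
    ring

end Lower

theorem stmt_6 {d : ℕ} (hd : 2 ≤ d) : nbox (d - 1) d = 3 * 2 ^ (d - 2) := by
  classical
  obtain ⟨m, rfl⟩ : ∃ m, d = m + 2 := ⟨d - 2, by omega⟩
  have e3 : m + 2 - 2 = m := by omega
  have e1 : m + 2 - 1 = m + 1 := by omega
  rw [e3]
  set Sset := {n | ∃ F : Finset (Fin (m + 2) → Option Bool),
    Nbly (m + 2 - 1) F ∧ F.card = n} with hSset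
  have hmem : 3 * 2 ^ m ∈ Sset := by
    obtain ⟨F, hF, hcard⟩ := construction m
    exact ⟨F, by rwa [e1], hcard⟩
  have hub : ∀ n ∈ Sset, n ≤ 3 * 2 ^ m := by
    rintro n ⟨F, hF, rfl⟩
    have := upper_bound (d := m + 2) (by omega) hF
    rwa [e3] at this
  refine le_antisymm (csSup_le ⟨_, hmem⟩ hub) (le_csSup ⟨3 * 2 ^ m, hub⟩ hmem)
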